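/- For each n ≥ 0, the function G_n(x) = (−1)ⁿ e^{x²/2}(dⁿ/dxⁿ)(e^{−x²}) satisfies L G_n = −n·G_n, where L = (1/2)(d²/dx² + 1 − x²); moreover G_n ∈ L²(ℝ, dx). -/

import Mathlib

open MeasureTheory Polynomial

/-- The Rodrigues polynomials: `iteratedDeriv n (exp (-x²)) = (P n).eval x * exp (-x²)`. -/
noncomputable def hermP : ℕ → Polynomial ℝ
  | 0 => 1
  | n + 1 => derivative (hermP n) - 2 * X * hermP n

/-- Derivative of a polynomial times a gaussian `exp (b x²)`. -/
lemma hasDerivAt_poly_gauss (q : Polynomial ℝ) (b x : ℝ) :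
    HasDerivAt (fun t : ℝ => q.eval t * Real.exp (b * t ^ 2))
      ((derivative q).eval x * Real.exp (b * x ^ 2)
        + q.eval x * (2 * b * x * Real.exp (b * x ^ 2))) x := by
  have h1 : HasDerivAt (fun t : ℝ => q.eval t) ((derivative q).eval x) x :=
    q.hasDerivAt x
  have h0 : HasDerivAt (fun t : ℝ => b * t ^ 2) (2 * b * x) x := by
    simpa [mul_comm, mul_assoc, mul_left_comm] using (hasDerivAt_pow 2 x).const_mul b
  have h2 : HasDerivAt (fun t : ℝ => Real.exp (b * t ^ 2))
      (2 * b * x * Real.exp (b * x ^ 2)) x := by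
    simpa [mul_comm] using h0.exp
  exact h1.mul h2

lemma iteratedDeriv_gauss (n : ℕ) (x : ℝ) :
    iteratedDeriv n (fun t : ℝ => Real.exp (-t ^ 2)) x
      = (hermP n).eval x * Real.exp (-x ^ 2) := by
  induction n generalizing x with
  | zero => simp [hermP]
  | succ n ih =>
    rw [iteratedDeriv_succ]
    have hfun : iteratedDeriv n (fun t : ℝ => Real.exp (-t ^ 2))
        = fun t : ℝ => (hermP n).eval t * Real.exp ((-1) * t ^ 2) := by
      funext t; rw [ih t]; norm_num
    rw [hfun]
    have h := (hasDerivAt_poly_gauss (hermP n) (-1) x).deriv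
    rw [h]
    have : (-1 : ℝ) * x ^ 2 = -x ^ 2 := by ring
    rw [this]
    simp [hermP]
    ring

/-- The Hermite ODE at polynomial level. -/
lemma hermP_ode (n : ℕ) :
    derivative (derivative (hermP n))
      = 2 * X * derivative (hermP n) - 2 * (n : Polynomial ℝ) * hermP n := by
  induction n with
  | zero => simp [hermP]
  | succ n ih =>
    have ih' := congrArg derivative ih
    simp only [derivative_sub, derivative_mul, derivative_X, derivative_natCast,
      derivative_ofNat, mul_one, zero_mul, mul_zero, zero_add, add_zero, sub_zero] at ih'
    show derivative (derivative (hermP (n + 1)))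
      = 2 * X * derivative (hermP (n + 1)) - 2 * ((n + 1 : ℕ) : Polynomial ℝ) * hermP (n + 1)
    simp only [hermP, derivative_sub, derivative_add, derivative_mul, derivative_X,
      derivative_ofNat, mul_one, zero_mul, zero_add, Nat.cast_succ]
    linear_combination ih' - 2 * X * ih

lemma integrable_poly_gauss (q : Polynomial ℝ) :
    Integrable (fun x : ℝ => q.eval x * Real.exp (-x ^ 2)) volume := by
  have hmono : ∀ k : ℕ, Integrable (fun x : ℝ => x ^ k * Real.exp (-x ^ 2)) volume := by
    intro k
    have := integrable_rpow_mul_exp_neg_mul_sq (b := 1) one_pos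
      (s := (k : ℝ)) (lt_of_lt_of_le neg_one_lt_zero (Nat.cast_nonneg k))
    simpa [Real.rpow_natCast] using this
  have : (fun x : ℝ => q.eval x * Real.exp (-x ^ 2))
      = fun x : ℝ => ∑ i ∈ Finset.range (q.natDegree + 1),
          q.coeff i * (x ^ i * Real.exp (-x ^ 2)) := by
    funext x
    rw [Polynomial.eval_eq_sum_range, Finset.sum_mul]
    exact Finset.sum_congr rfl fun i _ => by ring
  rw [this]
  exact integrable_finset_sum _ fun i _ => ((hmono i).const_mul _)

open Real in
/-- The Hermite function `G_n(x) = (−1)ⁿ e^{x²/2}(dⁿ/dxⁿ)(e^{−x²})` satisfies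
`L G_n = −n G_n` for `L = (1/2)(d²/dx² + 1 − x²)`, and `G_n ∈ L²(ℝ, dx)`. -/
theorem hermite_oscillator_eigenfunction (n : ℕ) (G : ℝ → ℝ)
    (hG : G = fun x =>
        (-1 : ℝ) ^ n * Real.exp (x ^ 2 / 2)
          * iteratedDeriv n (fun t => Real.exp (-t ^ 2)) x) :
    (∀ x, (1 / 2) * (deriv (deriv G) x + (1 - x ^ 2) * G x) = -(n : ℝ) * G x)
    ∧ MemLp G 2 (volume : Measure ℝ) := by
  -- G = q(x) e^{-x²/2} with q = (-1)^n • hermP n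
  set q : Polynomial ℝ := C ((-1 : ℝ) ^ n) * hermP n with hq
  have hGq : G = fun x : ℝ => q.eval x * Real.exp (-(1 / 2) * x ^ 2) := by
    funext x
    rw [hG]
    simp only [iteratedDeriv_gauss, hq, eval_mul, eval_C]
    rw [mul_comm ((-1 : ℝ) ^ n) ((hermP n).eval x), mul_assoc, mul_assoc,
      mul_comm (Real.exp (x ^ 2 / 2)), mul_assoc, ← Real.exp_add]
    ring_nf
  -- the ODE for q
  have hode : derivative (derivative q)
      = 2 * X * derivative q - 2 * (n : Polynomial ℝ) * q := by
    simp only [hq, derivative_mul, derivative_C, zero_mul, zero_add]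
    rw [hermP_ode n]
    ring
  -- first derivative
  set r : Polynomial ℝ := derivative q - X * q with hr
  have hGd : ∀ x : ℝ, HasDerivAt G (r.eval x * Real.exp (-(1 / 2) * x ^ 2)) x := by
    intro x
    rw [hGq]
    have := hasDerivAt_poly_gauss q (-(1 / 2)) x
    convert this using 1
    simp [hr]
    ring
  have hderivG : deriv G = fun x : ℝ => r.eval x * Real.exp (-(1 / 2) * x ^ 2) := by
    funext x; exact (hGd x).deriv
  set s : Polynomial ℝ := derivative r - X * r with hs
  have hderiv2 : ∀ x : ℝ, deriv (deriv G) x = s.eval x * Real.exp (-(1 / 2) * x ^ 2) := by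
    intro x
    rw [hderivG]
    have := (hasDerivAt_poly_gauss r (-(1 / 2)) x).deriv
    rw [this]
    simp [hs]
    ring
  constructor
  · intro x
    rw [hderiv2 x, hGq]
    -- polynomial identity: s + (1 - X²) q = -2n q
    have key : s + (1 - X ^ 2) * q = -(2 * (n : Polynomial ℝ)) * q := by
      simp only [hs, hr, derivative_sub, derivative_mul, derivative_X, one_mul]
      rw [hode]
      ring
    have keyx := congrArg (fun p : Polynomial ℝ => p.eval x) key
    simp only [eval_add, eval_mul, eval_sub, eval_one, eval_pow, eval_X, eval_C,
      eval_neg, eval_natCast, eval_ofNat] at keyx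
    have : s.eval x = -(2 * (n : ℝ)) * q.eval x - (1 - x ^ 2) * q.eval x := by
      linarith [keyx]
    rw [this]
    ring
  · rw [hGq]
    have hcont : Continuous fun x : ℝ => q.eval x * Real.exp (-(1 / 2) * x ^ 2) := by
      fun_prop
    rw [memLp_two_iff_integrable_sq hcont.aestronglyMeasurable]
    have : (fun x : ℝ => (q.eval x * Real.exp (-(1 / 2) * x ^ 2)) ^ 2)
        = fun x : ℝ => (q * q).eval x * Real.exp (-x ^ 2) := by
      funext x
      have he : Real.exp (-(1 / 2) * x ^ 2) * Real.exp (-(1 / 2) * x ^ 2)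
          = Real.exp (-x ^ 2) := by
        rw [← Real.exp_add]; congr 1; ring
      conv_rhs => rw [eval_mul]
      rw [← he]; ring
    rw [this]
    exact integrable_poly_gauss (q * q)
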